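/- The functions f⁽¹⁾_{l,m,n}(Z) = (t^l_{n−½,m}(Z), −t^l_{n+½,m}(Z))ᵀ are left anti regular: ∇ f⁽¹⁾_{l,m,n} = 0, where t^l_{n,m}(Z) = (1/2πi)∮ (s z₁₁ + z₂₁)^{l−m}(s z₁₂ + z₂₂)^{l+m} s^{−l+n} ds/s are the SU(2) matrix coefficients extended as polynomials on 2×2 complex matrices Z. -/

import Mathlib

noncomputable section

/-- The SU(2) matrix coefficient `t^l_{n,m}` in the parametrization `a = l − m`,
`b = l + m`, `k = n − l`:
`T a b k (Z) = (1/2πi) ∮_{|s|=1} (s z₁₁ + z₂₁)^a (s z₁₂ + z₂₂)^b s^k ds/s`,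
regarded as a polynomial in the entries of the 2×2 complex matrix `Z`. -/
def Tc (a b : ℕ) (k : ℤ) (Z : Fin 2 → Fin 2 → ℂ) : ℂ :=
  (2 * (Real.pi : ℂ) * Complex.I)⁻¹ *
    circleIntegral (fun s => (s * Z 0 0 + Z 1 0) ^ a * (s * Z 0 1 + Z 1 1) ^ b * s ^ (k - 1)) 0 1

/-- The partial derivative `∂ᵢⱼ = ∂/∂zᵢⱼ` in the entries of a 2×2 complex matrix. -/
def mpd (i j : Fin 2) (f : (Fin 2 → Fin 2 → ℂ) → ℂ) : (Fin 2 → Fin 2 → ℂ) → ℂ :=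
  fun Z => fderiv ℂ f Z (Pi.single i (Pi.single j 1))

namespace F1LAR

open Finset Complex

abbrev M := Fin 2 → Fin 2 → ℂ

/-! ### Integral computations -/

lemma ci_zpow (m : ℤ) : (∮ z in C((0:ℂ),1), z ^ m) =
    if m = -1 then 2 * (Real.pi : ℂ) * Complex.I else 0 := by
  split_ifs with h
  · subst h
    have h0 : (0:ℂ) ∈ Metric.ball (0:ℂ) 1 := by simp
    have := circleIntegral.integral_sub_inv_of_mem_ball h0
    simpa [zpow_neg_one, mul_assoc] using this
  · have := circleIntegral.integral_sub_zpow_of_ne h (0:ℂ) 0 1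
    simpa using this

lemma ci_integrable (c : ℂ) (m : ℤ) : CircleIntegrable (fun z : ℂ => c * z ^ m) 0 1 := by
  have h : CircleIntegrable (fun z : ℂ => (z - 0) ^ m) (0:ℂ) 1 := by
    rw [circleIntegrable_sub_zpow_iff]
    right; right
    simp
  simp only [sub_zero] at h
  unfold CircleIntegrable at h ⊢
  exact h.const_mul c

lemma ci_sum {ι : Type*} (s : Finset ι) (f : ι → ℂ → ℂ)
    (h : ∀ i ∈ s, CircleIntegrable (f i) 0 1) :
    (∮ z in C((0:ℂ),1), ∑ i ∈ s, f i z) = ∑ i ∈ s, ∮ z in C((0:ℂ),1), f i z := by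
  simp only [circleIntegral, Finset.smul_sum]
  rw [intervalIntegral.integral_finset_sum]
  exact fun i hi => (h i hi).out

lemma ci_fsum {ι : Type*} (s : Finset ι) (f : ι → ℂ → ℂ)
    (h : ∀ i ∈ s, CircleIntegrable (f i) 0 1) :
    CircleIntegrable (fun z => ∑ i ∈ s, f i z) 0 1 := by
  unfold CircleIntegrable at *
  have h2 : (∑ x ∈ s, fun θ => f x (circleMap 0 1 θ))
      = fun θ => ∑ i ∈ s, f i (circleMap 0 1 θ) := by
    ext θ; simp
  exact h2 ▸ IntervalIntegrable.sum s (f := fun i θ => f i (circleMap 0 1 θ)) h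

lemma two_pi_I_ne : (2 * (Real.pi : ℂ) * Complex.I) ≠ 0 := by
  simp [Real.pi_ne_zero, Complex.I_ne_zero, Complex.ofReal_ne_zero]

/-- Closed polynomial form of `Tc`. -/
lemma Tc_eq (a b : ℕ) (k : ℤ) (Z : M) :
    Tc a b k Z = ∑ i ∈ range (a+1), ∑ j ∈ range (b+1),
      (if (i:ℤ) + j + k = 0 then ((a.choose i : ℂ) * (b.choose j)) else 0) *
        Z 0 0 ^ i * Z 1 0 ^ (a - i) * Z 0 1 ^ j * Z 1 1 ^ (b - j) := by
  have h1 : circleIntegral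
      (fun s => (s * Z 0 0 + Z 1 0) ^ a * (s * Z 0 1 + Z 1 1) ^ b * s ^ (k - 1)) 0 1
      = circleIntegral (fun s => ∑ i ∈ range (a+1), ∑ j ∈ range (b+1),
          ((a.choose i : ℂ) * (b.choose j) * Z 0 0 ^ i * Z 1 0 ^ (a - i) * Z 0 1 ^ j
            * Z 1 1 ^ (b - j)) * s ^ ((i:ℤ) + j + k - 1)) 0 1 := by
    apply circleIntegral.integral_congr zero_le_one
    intro s hs
    have hs0 : s ≠ 0 := by
      intro h; rw [h] at hs; simp at hs
    simp only
    rw [add_pow, add_pow, Finset.sum_mul_sum, Finset.sum_mul]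
    refine Finset.sum_congr rfl fun i hi => ?_
    rw [Finset.sum_mul]
    refine Finset.sum_congr rfl fun j hj => ?_
    have hz : s ^ ((i:ℤ) + j + k - 1) = s ^ (i:ℕ) * s ^ (j:ℕ) * s ^ (k - 1) := by
      rw [← zpow_natCast s i, ← zpow_natCast s j, ← zpow_add₀ hs0, ← zpow_add₀ hs0]
      ring_nf
    rw [hz, mul_pow, mul_pow]
    ring
  rw [Tc, h1,
    ci_sum _ _ (fun i _ => ci_fsum _ _ (fun j _ => ci_integrable _ _)),
    Finset.mul_sum]
  refine Finset.sum_congr rfl fun i _ => ?_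
  rw [ci_sum _ _ (fun j _ => ci_integrable _ _), Finset.mul_sum]
  refine Finset.sum_congr rfl fun j _ => ?_
  rw [circleIntegral.integral_const_mul, ci_zpow]
  have hiff : ((i:ℤ) + j + k - 1 = -1) ↔ ((i:ℤ) + j + k = 0) := by omega
  simp only [hiff]
  split_ifs with h
  case pos => field_simp [two_pi_I_ne]
  case neg => simp

/-! ### Derivative computations -/

def E (i j : Fin 2) : M →L[ℂ] ℂ :=
  (ContinuousLinearMap.proj (R := ℂ) (φ := fun _ : Fin 2 => ℂ) j).comp
    (ContinuousLinearMap.proj (R := ℂ) (φ := fun _ : Fin 2 => Fin 2 → ℂ) i)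

lemma E_apply (i j : Fin 2) (W : M) : E i j W = W i j := rfl

lemma hasF_coord (i j : Fin 2) (Z : M) : HasFDerivAt (fun W : M => W i j) (E i j) Z :=
  (E i j).hasFDerivAt

lemma hasF_pow (i j : Fin 2) (p : ℕ) (Z : M) :
    HasFDerivAt (fun W : M => W i j ^ p) (((p : ℂ) * Z i j ^ (p - 1)) • E i j) Z := by
  have h := (hasDerivAt_pow p (Z i j)).hasFDerivAt.comp Z (hasF_coord i j Z)
  refine h.congr_fderiv ?_
  ext W
  simp [E_apply, mul_comm]

lemma hasF_mono (c : ℂ) (p q r t : ℕ) (Z : M) :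
    HasFDerivAt (fun W : M => c * W 0 0 ^ p * W 1 0 ^ q * W 0 1 ^ r * W 1 1 ^ t)
      ((c * Z 0 0 ^ p * Z 1 0 ^ q * Z 0 1 ^ r) • (((t : ℂ) * Z 1 1 ^ (t - 1)) • E 1 1)
        + Z 1 1 ^ t • ((c * Z 0 0 ^ p * Z 1 0 ^ q) • (((r : ℂ) * Z 0 1 ^ (r - 1)) • E 0 1)
          + Z 0 1 ^ r • ((c * Z 0 0 ^ p) • (((q : ℂ) * Z 1 0 ^ (q - 1)) • E 1 0)
            + Z 1 0 ^ q • (c • (((p : ℂ) * Z 0 0 ^ (p - 1)) • E 0 0))))) Z :=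
  ((((hasF_pow 0 0 p Z).const_mul c).mul (hasF_pow 1 0 q Z)).mul (hasF_pow 0 1 r Z)).mul
    (hasF_pow 1 1 t Z)

lemma mpd_mono (i j : Fin 2) (c : ℂ) (p q r t : ℕ) (Z : M) :
    mpd i j (fun W => c * W 0 0 ^ p * W 1 0 ^ q * W 0 1 ^ r * W 1 1 ^ t) Z =
      (c * Z 0 0 ^ p * Z 1 0 ^ q * Z 0 1 ^ r) * ((t : ℂ) * Z 1 1 ^ (t - 1))
          * (Pi.single i (Pi.single j (1:ℂ)) : M) 1 1
        + Z 1 1 ^ t * ((c * Z 0 0 ^ p * Z 1 0 ^ q) * ((r : ℂ) * Z 0 1 ^ (r - 1))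
          * (Pi.single i (Pi.single j (1:ℂ)) : M) 0 1
        + Z 0 1 ^ r * ((c * Z 0 0 ^ p) * ((q : ℂ) * Z 1 0 ^ (q - 1))
          * (Pi.single i (Pi.single j (1:ℂ)) : M) 1 0
        + Z 1 0 ^ q * (c * (((p : ℂ) * Z 0 0 ^ (p - 1))
          * (Pi.single i (Pi.single j (1:ℂ)) : M) 0 0)))) := by
  unfold mpd
  rw [(hasF_mono c p q r t Z).fderiv]
  simp [E_apply, smul_eq_mul, mul_assoc]
  ring

lemma mpd00_mono (c : ℂ) (p q r t : ℕ) (Z : M) :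
    mpd 0 0 (fun W => c * W 0 0 ^ p * W 1 0 ^ q * W 0 1 ^ r * W 1 1 ^ t) Z =
      c * ((p : ℂ) * Z 0 0 ^ (p-1)) * Z 1 0 ^ q * Z 0 1 ^ r * Z 1 1 ^ t := by
  rw [mpd_mono]; norm_num [Pi.single_apply]; try ring

lemma mpd10_mono (c : ℂ) (p q r t : ℕ) (Z : M) :
    mpd 1 0 (fun W => c * W 0 0 ^ p * W 1 0 ^ q * W 0 1 ^ r * W 1 1 ^ t) Z =
      c * Z 0 0 ^ p * ((q : ℂ) * Z 1 0 ^ (q-1)) * Z 0 1 ^ r * Z 1 1 ^ t := by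
  rw [mpd_mono]; norm_num [Pi.single_apply]; try ring

lemma mpd01_mono (c : ℂ) (p q r t : ℕ) (Z : M) :
    mpd 0 1 (fun W => c * W 0 0 ^ p * W 1 0 ^ q * W 0 1 ^ r * W 1 1 ^ t) Z =
      c * Z 0 0 ^ p * Z 1 0 ^ q * ((r : ℂ) * Z 0 1 ^ (r-1)) * Z 1 1 ^ t := by
  rw [mpd_mono]; norm_num [Pi.single_apply]; try ring

lemma mpd11_mono (c : ℂ) (p q r t : ℕ) (Z : M) :
    mpd 1 1 (fun W => c * W 0 0 ^ p * W 1 0 ^ q * W 0 1 ^ r * W 1 1 ^ t) Z =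
      c * Z 0 0 ^ p * Z 1 0 ^ q * Z 0 1 ^ r * ((t : ℂ) * Z 1 1 ^ (t-1)) := by
  rw [mpd_mono]; norm_num [Pi.single_apply]; try ring

lemma mpd_sum {ι : Type*} (i j : Fin 2) (s : Finset ι) (f : ι → M → ℂ) (Z : M)
    (h : ∀ n ∈ s, DifferentiableAt ℂ (f n) Z) :
    mpd i j (fun W => ∑ n ∈ s, f n W) Z = ∑ n ∈ s, mpd i j (f n) Z := by
  unfold mpd
  rw [fderiv_fun_sum h, ContinuousLinearMap.sum_apply]

lemma mpd_neg (i j : Fin 2) (f : M → ℂ) (Z : M) :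
    mpd i j (fun W => -f W) Z = -(mpd i j f Z) := by
  unfold mpd
  rw [fderiv_fun_neg]
  simp

/-- `Tc` rewritten as a double sum of monomials (function form). -/
lemma Tc_fun_eq (a b : ℕ) (k : ℤ) :
    (fun W : M => Tc a b k W) = fun W : M => ∑ i ∈ range (a+1), ∑ j ∈ range (b+1),
      (if (i:ℤ) + j + k = 0 then ((a.choose i : ℂ) * (b.choose j)) else 0) *
        W 0 0 ^ i * W 1 0 ^ (a - i) * W 0 1 ^ j * W 1 1 ^ (b - j) :=
  funext fun W => Tc_eq a b k W

lemma mpd_Tc (i' j' : Fin 2) (a b : ℕ) (k : ℤ) (Z : M) :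
    mpd i' j' (fun W => Tc a b k W) Z = ∑ i ∈ range (a+1), ∑ j ∈ range (b+1),
      mpd i' j' (fun W =>
        (if (i:ℤ) + j + k = 0 then ((a.choose i : ℂ) * (b.choose j)) else 0) *
          W 0 0 ^ i * W 1 0 ^ (a - i) * W 0 1 ^ j * W 1 1 ^ (b - j)) Z := by
  rw [Tc_fun_eq]
  rw [mpd_sum i' j' _ _ Z (fun n _ => DifferentiableAt.fun_sum
      (fun m _ => (hasF_mono _ _ _ _ _ Z).differentiableAt))]
  exact Finset.sum_congr rfl fun n _ => mpd_sum i' j' _ _ Z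
    (fun m _ => (hasF_mono _ _ _ _ _ Z).differentiableAt)

/-! ### The combinatorial identity -/

lemma choose_cast (aa i : ℕ) :
    ((aa.choose (i+1) : ℂ)) * ((i:ℂ)+1) = (aa.choose i : ℂ) * ((aa - i : ℕ) : ℂ) := by
  exact_mod_cast congrArg (Nat.cast : ℕ → ℂ) (Nat.choose_succ_right_eq aa i)

lemma key_sum1 (a b : ℕ) (k : ℤ) (x y u v : ℂ) :
    (∑ i ∈ range (a+1), ∑ j ∈ range (b+1),
      (if (i:ℤ) + j + k = 0 then ((a.choose i : ℂ) * (b.choose j)) else 0) *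
        ((i : ℂ) * x ^ (i-1)) * y ^ (a - i) * u ^ j * v ^ (b - j))
    = ∑ i ∈ range (a+1), ∑ j ∈ range (b+1),
      (if (i:ℤ) + j + (k+1) = 0 then ((a.choose i : ℂ) * (b.choose j)) else 0) *
        x ^ i * (((a - i : ℕ) : ℂ) * y ^ (a - i - 1)) * u ^ j * v ^ (b - j) := by
  conv_lhs => rw [Finset.sum_range_succ' _ a]
  conv_rhs => rw [Finset.sum_range_succ]
  have h0 : (∑ j ∈ range (b+1),
      (if ((0:ℕ):ℤ) + j + k = 0 then ((a.choose 0 : ℂ) * (b.choose j)) else 0) *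
        (((0:ℕ) : ℂ) * x ^ (0-1)) * y ^ (a - 0) * u ^ j * v ^ (b - j)) = 0 := by
    apply Finset.sum_eq_zero; intro j _; simp
  have ha : (∑ j ∈ range (b+1),
      (if ((a:ℕ):ℤ) + j + (k+1) = 0 then ((a.choose a : ℂ) * (b.choose j)) else 0) *
        x ^ a * (((a - a : ℕ) : ℂ) * y ^ (a - a - 1)) * u ^ j * v ^ (b - j)) = 0 := by
    apply Finset.sum_eq_zero; intro j _; simp
  rw [h0, ha, add_zero, add_zero]
  refine Finset.sum_congr rfl fun i hi => ?_
  refine Finset.sum_congr rfl fun j _ => ?_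
  have hcond : (((i+1:ℕ):ℤ) + j + k = 0) ↔ ((i:ℤ) + j + (k+1) = 0) := by
    push_cast; omega
  simp only [hcond]
  split_ifs with h
  · have hco := choose_cast a i
    have hsub : a - (i+1) = a - i - 1 := by omega
    rw [hsub, Nat.add_sub_cancel]
    push_cast [Nat.cast_add, Nat.cast_one]
    linear_combination ((b.choose j : ℂ) * x ^ i * y ^ (a - i - 1) * u ^ j * v ^ (b - j)) * hco
  · simp

lemma key_sum2 (a b : ℕ) (k : ℤ) (x y u v : ℂ) :
    (∑ i ∈ range (a+1), ∑ j ∈ range (b+1),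
      (if (i:ℤ) + j + k = 0 then ((a.choose i : ℂ) * (b.choose j)) else 0) *
        x ^ i * y ^ (a - i) * ((j : ℂ) * u ^ (j-1)) * v ^ (b - j))
    = ∑ i ∈ range (a+1), ∑ j ∈ range (b+1),
      (if (i:ℤ) + j + (k+1) = 0 then ((a.choose i : ℂ) * (b.choose j)) else 0) *
        x ^ i * y ^ (a - i) * u ^ j * (((b - j : ℕ) : ℂ) * v ^ (b - j - 1)) := by
  refine Finset.sum_congr rfl fun i _ => ?_
  rw [Finset.sum_range_succ' _ b, Finset.sum_range_succ]
  have h0 : (if (i:ℤ) + ((0:ℕ):ℤ) + k = 0 then ((a.choose i : ℂ) * (b.choose 0)) else 0) *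
        x ^ i * y ^ (a - i) * (((0:ℕ) : ℂ) * u ^ (0-1)) * v ^ (b - 0) = 0 := by simp
  have hb : (if (i:ℤ) + (b:ℤ) + (k+1) = 0 then ((a.choose i : ℂ) * (b.choose b)) else 0) *
        x ^ i * y ^ (a - i) * u ^ b * (((b - b : ℕ) : ℂ) * v ^ (b - b - 1)) = 0 := by simp
  rw [h0, hb, add_zero, add_zero]
  refine Finset.sum_congr rfl fun j hj => ?_
  have hcond : ((i:ℤ) + ((j+1:ℕ):ℤ) + k = 0) ↔ ((i:ℤ) + j + (k+1) = 0) := by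
    push_cast; omega
  simp only [hcond]
  split_ifs with h
  · have hco := choose_cast b j
    have hsub : b - (j+1) = b - j - 1 := by omega
    rw [hsub, Nat.add_sub_cancel]
    push_cast [Nat.cast_add, Nat.cast_one]
    linear_combination ((a.choose i : ℂ) * x ^ i * y ^ (a - i) * u ^ j * v ^ (b - j - 1)) * hco
  · simp

end F1LAR

open F1LAR Finset

theorem f1_left_anti_regular (a b : ℕ) (k : ℤ)
    (hk1 : -(a + b : ℤ) - 1 ≤ k) (hk2 : k ≤ 0) :
    ∀ Z : Fin 2 → Fin 2 → ℂ,
      2 * (mpd 0 0 (fun W => Tc a b k W) Z + mpd 1 0 (fun W => -Tc a b (k + 1) W) Z) = 0 ∧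
      2 * (mpd 0 1 (fun W => Tc a b k W) Z + mpd 1 1 (fun W => -Tc a b (k + 1) W) Z) = 0 := by
  intro Z
  have hneg10 : mpd 1 0 (fun W => -Tc a b (k + 1) W) Z = -(mpd 1 0 (fun W => Tc a b (k+1) W) Z) :=
    mpd_neg 1 0 _ Z
  have hneg11 : mpd 1 1 (fun W => -Tc a b (k + 1) W) Z = -(mpd 1 1 (fun W => Tc a b (k+1) W) Z) :=
    mpd_neg 1 1 _ Z
  constructor
  · rw [hneg10, mpd_Tc 0 0 a b k Z, mpd_Tc 1 0 a b (k+1) Z]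
    have h1 : (∑ i ∈ range (a+1), ∑ j ∈ range (b+1),
        mpd 0 0 (fun W =>
          (if (i:ℤ) + j + k = 0 then ((a.choose i : ℂ) * (b.choose j)) else 0) *
            W 0 0 ^ i * W 1 0 ^ (a - i) * W 0 1 ^ j * W 1 1 ^ (b - j)) Z)
        = ∑ i ∈ range (a+1), ∑ j ∈ range (b+1),
          (if (i:ℤ) + j + k = 0 then ((a.choose i : ℂ) * (b.choose j)) else 0) *
            ((i : ℂ) * Z 0 0 ^ (i-1)) * Z 1 0 ^ (a - i) * Z 0 1 ^ j * Z 1 1 ^ (b - j) := by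
      refine Finset.sum_congr rfl fun i _ => Finset.sum_congr rfl fun j _ => ?_
      rw [mpd00_mono]; try ring
    have h2 : (∑ i ∈ range (a+1), ∑ j ∈ range (b+1),
        mpd 1 0 (fun W =>
          (if (i:ℤ) + j + (k+1) = 0 then ((a.choose i : ℂ) * (b.choose j)) else 0) *
            W 0 0 ^ i * W 1 0 ^ (a - i) * W 0 1 ^ j * W 1 1 ^ (b - j)) Z)
        = ∑ i ∈ range (a+1), ∑ j ∈ range (b+1),
          (if (i:ℤ) + j + (k+1) = 0 then ((a.choose i : ℂ) * (b.choose j)) else 0) *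
            Z 0 0 ^ i * (((a - i : ℕ) : ℂ) * Z 1 0 ^ (a - i - 1)) * Z 0 1 ^ j * Z 1 1 ^ (b - j) := by
      refine Finset.sum_congr rfl fun i _ => Finset.sum_congr rfl fun j _ => ?_
      rw [mpd10_mono]; try ring
    rw [h1, h2, key_sum1 a b k (Z 0 0) (Z 1 0) (Z 0 1) (Z 1 1)]
    ring
  · rw [hneg11, mpd_Tc 0 1 a b k Z, mpd_Tc 1 1 a b (k+1) Z]
    have h1 : (∑ i ∈ range (a+1), ∑ j ∈ range (b+1),
        mpd 0 1 (fun W =>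
          (if (i:ℤ) + j + k = 0 then ((a.choose i : ℂ) * (b.choose j)) else 0) *
            W 0 0 ^ i * W 1 0 ^ (a - i) * W 0 1 ^ j * W 1 1 ^ (b - j)) Z)
        = ∑ i ∈ range (a+1), ∑ j ∈ range (b+1),
          (if (i:ℤ) + j + k = 0 then ((a.choose i : ℂ) * (b.choose j)) else 0) *
            Z 0 0 ^ i * Z 1 0 ^ (a - i) * ((j : ℂ) * Z 0 1 ^ (j-1)) * Z 1 1 ^ (b - j) := by
      refine Finset.sum_congr rfl fun i _ => Finset.sum_congr rfl fun j _ => ?_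
      rw [mpd01_mono]; try ring
    have h2 : (∑ i ∈ range (a+1), ∑ j ∈ range (b+1),
        mpd 1 1 (fun W =>
          (if (i:ℤ) + j + (k+1) = 0 then ((a.choose i : ℂ) * (b.choose j)) else 0) *
            W 0 0 ^ i * W 1 0 ^ (a - i) * W 0 1 ^ j * W 1 1 ^ (b - j)) Z)
        = ∑ i ∈ range (a+1), ∑ j ∈ range (b+1),
          (if (i:ℤ) + j + (k+1) = 0 then ((a.choose i : ℂ) * (b.choose j)) else 0) *
            Z 0 0 ^ i * Z 1 0 ^ (a - i) * Z 0 1 ^ j * (((b - j : ℕ) : ℂ) * Z 1 1 ^ (b - j - 1)) := by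
      refine Finset.sum_congr rfl fun i _ => Finset.sum_congr rfl fun j _ => ?_
      rw [mpd11_mono]; try ring
    rw [h1, h2, key_sum2 a b k (Z 0 0) (Z 1 0) (Z 0 1) (Z 1 1)]
    ring
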